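/- Let p be a prime, β ≥ 2, n ≥ 2 integers, and m an integer coprime to p. Then Σ over coprime residues x mod p^β of Kl_n(x, p^β)·(Kl_n(mx, p^β) + Kl_n(−mx, p^β)) equals p^{βn}·(2/φ(p^β))·Σ over primitive even Dirichlet characters χ mod p^β of χ̄(m). -/

import Mathlib

open scoped Classical
open Finset Complex

noncomputable def eRat (x : ℚ) : ℂ := Complex.exp (2 * Real.pi * Complex.I * (x : ℂ))

noncomputable def eZMod (q : ℕ) [NeZero q] (a : ZMod q) : ℂ := eRat ((a.val : ℚ) / q)

/-- The hyper-Kloosterman sum `Kl_n(r, q)`. -/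
noncomputable def Kl (q : ℕ) [NeZero q] (n : ℕ) (r : ZMod q) : ℂ :=
  ∑ x ∈ Finset.univ.filter (fun x : Fin n → ZMod q => ∏ i, x i = r),
    eZMod q (∑ i, x i)

/- ### Auxiliary lemmas -/

lemma eZMod_eq_stdAddChar {q : ℕ} [NeZero q] (a : ZMod q) :
    eZMod q a = ZMod.stdAddChar a := by
  conv_rhs => rw [← ZMod.natCast_rightInverse a, ← Int.cast_natCast, ZMod.stdAddChar_coe]
  unfold eZMod eRat
  push_cast
  rw [mul_div_assoc]

lemma addChar_map_sum {A M : Type*} [AddCommMonoid A] [CommMonoid M] (ψ : AddChar A M)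
    {ι : Type*} (s : Finset ι) (f : ι → A) :
    ψ (∑ i ∈ s, f i) = ∏ i ∈ s, ψ (f i) := by
  induction s using Finset.cons_induction with
  | empty => simp
  | cons i s hi ih => rw [Finset.sum_cons, Finset.prod_cons, ψ.map_add_eq_mul, ih]

lemma sum_tuple_eq_gaussSum_pow {q : ℕ} [NeZero q] (χ : DirichletCharacter ℂ q) (n : ℕ) :
    ∑ a : Fin n → ZMod q, χ (∏ i, a i) * eZMod q (∑ i, a i)
      = (gaussSum χ ZMod.stdAddChar) ^ n := by
  rw [gaussSum, Fintype.sum_pow]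
  refine Finset.sum_congr rfl fun a _ => ?_
  rw [eZMod_eq_stdAddChar, map_prod, addChar_map_sum, ← Finset.prod_mul_distrib]

lemma sum_units_eq {q : ℕ} [NeZero q] (f : ZMod q → ℂ) (h0 : ∀ c, ¬IsUnit c → f c = 0) :
    ∑ u : (ZMod q)ˣ, f ↑u = ∑ c : ZMod q, f c := by
  classical
  have h : ∑ u : (ZMod q)ˣ, f ↑u
      = ∑ c ∈ Finset.univ.image (fun u : (ZMod q)ˣ => (u : ZMod q)), f c :=
    (Finset.sum_image (fun u _ v _ h => Units.ext h)).symm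
  rw [h]
  refine Finset.sum_subset (Finset.subset_univ _) fun c _ hc => h0 c fun hu => ?_
  exact hc (Finset.mem_image.mpr ⟨hu.unit, Finset.mem_univ _, hu.unit_spec⟩)

lemma sum_mul_Kl {q : ℕ} [NeZero q] (n : ℕ) (g : ZMod q → ℂ) :
    ∑ c : ZMod q, g c * Kl q n c
      = ∑ a : Fin n → ZMod q, g (∏ i, a i) * eZMod q (∑ i, a i) := by
  rw [← Finset.sum_fiberwise Finset.univ (fun a : Fin n → ZMod q => ∏ i, a i)
      (fun a => g (∏ i, a i) * eZMod q (∑ i, a i))]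
  refine Finset.sum_congr rfl fun c _ => ?_
  rw [Kl, Finset.mul_sum]
  refine Finset.sum_congr rfl fun a ha => ?_
  rw [(Finset.mem_filter.mp ha).2]

lemma char_inv_unit {q : ℕ} [NeZero q] (χ : DirichletCharacter ℂ q) (x : (ZMod q)ˣ) :
    χ ↑x⁻¹ = χ⁻¹ ↑x := by
  have h1 : χ ↑x * χ ↑x⁻¹ = 1 := by
    rw [← map_mul, ← Units.val_mul, mul_inv_cancel, Units.val_one, map_one]
  have h2 : χ ↑x * χ⁻¹ ↑x = 1 := by
    rw [← MulChar.mul_apply, mul_inv_cancel, MulChar.one_apply (x.isUnit)]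
  have h3 : χ ↑x ≠ 0 := fun h => by rw [h, zero_mul] at h1; exact zero_ne_one h1
  exact mul_left_cancel₀ h3 (h1.trans h2.symm)

lemma Kl_unit {q : ℕ} [NeZero q] (n : ℕ) (c : (ZMod q)ˣ) :
    Kl q n ↑c = (q.totient : ℂ)⁻¹ *
      ∑ χ : DirichletCharacter ℂ q, χ ↑c⁻¹ * (gaussSum χ ZMod.stdAddChar) ^ n := by
  have hφ : (q.totient : ℂ) ≠ 0 := by
    exact_mod_cast (Nat.totient_pos.mpr (NeZero.pos q)).ne'
  have : ∑ χ : DirichletCharacter ℂ q, χ ↑c⁻¹ * (gaussSum χ ZMod.stdAddChar) ^ n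
      = (q.totient : ℂ) * Kl q n ↑c := by
    calc ∑ χ : DirichletCharacter ℂ q, χ ↑c⁻¹ * (gaussSum χ ZMod.stdAddChar) ^ n
        = ∑ χ : DirichletCharacter ℂ q, ∑ a : Fin n → ZMod q,
            χ ↑c⁻¹ * χ (∏ i, a i) * eZMod q (∑ i, a i) := by
          refine Finset.sum_congr rfl fun χ _ => ?_
          rw [← sum_tuple_eq_gaussSum_pow, Finset.mul_sum]
          exact Finset.sum_congr rfl fun a _ => by ring
      _ = ∑ a : Fin n → ZMod q,
            (∑ χ : DirichletCharacter ℂ q, χ ↑c⁻¹ * χ (∏ i, a i)) * eZMod q (∑ i, a i) := by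
          rw [Finset.sum_comm]
          exact Finset.sum_congr rfl fun a _ => by rw [Finset.sum_mul]
      _ = ∑ a : Fin n → ZMod q,
            (if (c : ZMod q) = ∏ i, a i then (q.totient : ℂ) else 0) * eZMod q (∑ i, a i) := by
          refine Finset.sum_congr rfl fun a _ => ?_
          rw [← DirichletCharacter.sum_char_inv_mul_char_eq ℂ c.isUnit (∏ i, a i),
            ZMod.inv_coe_unit]
      _ = (q.totient : ℂ) * Kl q n ↑c := by
          rw [Kl, Finset.mul_sum, Finset.sum_filter]
          refine Finset.sum_congr rfl fun a _ => ?_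
          by_cases h : ∏ i, a i = (c : ZMod q)
          · rw [if_pos h, if_pos h.symm]
          · rw [if_neg h, if_neg (fun hh => h hh.symm), zero_mul]
  rw [this, ← mul_assoc, inv_mul_cancel₀ hφ, one_mul]

lemma sum_char_inv_Kl {q : ℕ} [NeZero q] (n : ℕ) (χ : DirichletCharacter ℂ q) :
    ∑ x : (ZMod q)ˣ, χ ↑x⁻¹ * Kl q n ↑x = (gaussSum χ⁻¹ ZMod.stdAddChar) ^ n := by
  have h1 : ∀ x : (ZMod q)ˣ, χ ↑x⁻¹ * Kl q n ↑x = χ⁻¹ ↑x * Kl q n ↑x := fun x => by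
    rw [char_inv_unit]
  rw [Finset.sum_congr rfl fun x _ => h1 x]
  refine Eq.trans (sum_units_eq (fun c => χ⁻¹ c * Kl q n c) fun c hc => ?_) ?_
  · show χ⁻¹ c * Kl q n c = 0
    rw [MulChar.map_nonunit _ hc, zero_mul]
  · show ∑ c : ZMod q, χ⁻¹ c * Kl q n c = _
    rw [sum_mul_Kl, sum_tuple_eq_gaussSum_pow]

lemma T_eval {q : ℕ} [NeZero q] (n : ℕ) (w : (ZMod q)ˣ) :
    ∑ x : (ZMod q)ˣ, Kl q n ↑x * Kl q n (↑w * ↑x)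
      = (q.totient : ℂ)⁻¹ * ∑ χ : DirichletCharacter ℂ q,
          χ ↑w⁻¹ * ((gaussSum χ ZMod.stdAddChar) ^ n * (gaussSum χ⁻¹ ZMod.stdAddChar) ^ n) := by
  calc ∑ x : (ZMod q)ˣ, Kl q n ↑x * Kl q n (↑w * ↑x)
      = ∑ x : (ZMod q)ˣ, Kl q n ↑x * ((q.totient : ℂ)⁻¹ *
          ∑ χ : DirichletCharacter ℂ q, χ ↑(w * x)⁻¹ * (gaussSum χ ZMod.stdAddChar) ^ n) := by
        refine Finset.sum_congr rfl fun x _ => ?_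
        rw [← Units.val_mul, Kl_unit n (w * x)]
    _ = ∑ x : (ZMod q)ˣ, ∑ χ : DirichletCharacter ℂ q,
          (q.totient : ℂ)⁻¹ *
            (χ ↑w⁻¹ * (χ ↑x⁻¹ * Kl q n ↑x * (gaussSum χ ZMod.stdAddChar) ^ n)) := by
        refine Finset.sum_congr rfl fun x _ => ?_
        rw [Finset.mul_sum, Finset.mul_sum]
        refine Finset.sum_congr rfl fun χ _ => ?_
        have h : χ ↑(w * x)⁻¹ = χ ↑w⁻¹ * χ ↑x⁻¹ := by
          rw [mul_inv, Units.val_mul, map_mul]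
        rw [h]; ring
    _ = (q.totient : ℂ)⁻¹ * ∑ χ : DirichletCharacter ℂ q,
          χ ↑w⁻¹ * ((gaussSum χ ZMod.stdAddChar) ^ n * (gaussSum χ⁻¹ ZMod.stdAddChar) ^ n) := by
        rw [Finset.sum_comm, Finset.mul_sum]
        refine Finset.sum_congr rfl fun χ _ => ?_
        rw [← Finset.mul_sum]
        congr 1
        rw [← Finset.mul_sum]
        congr 1
        rw [← Finset.sum_mul, sum_char_inv_Kl, mul_comm]

lemma gaussSum_mul_gaussSum_inv {q : ℕ} [NeZero q] {χ : DirichletCharacter ℂ q}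
    (hχ : χ.IsPrimitive) :
    gaussSum χ ZMod.stdAddChar * gaussSum χ⁻¹ ZMod.stdAddChar = χ (-1) * q := by
  have h0 := hχ.fourierTransform_eq_inv_mul_gaussSum
  have h1 : (ZMod.dft.symm (ZMod.dft (⇑χ))) 1 = χ 1 := by
    rw [LinearEquiv.symm_apply_apply]
  rw [ZMod.invDFT_apply'] at h1
  have h2 : ZMod.dft (ZMod.dft (⇑χ)) (-1)
      = gaussSum χ ZMod.stdAddChar * (χ⁻¹ (-1) * gaussSum χ⁻¹ ZMod.stdAddChar) := by
    rw [ZMod.dft_apply]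
    have : ∀ j : ZMod q, ZMod.stdAddChar (-(j * (-1 : ZMod q))) • (ZMod.dft (⇑χ)) j
        = gaussSum χ ZMod.stdAddChar * (χ⁻¹ (-1) * (χ⁻¹ j * ZMod.stdAddChar j)) := by
      intro j
      rw [h0 j, smul_eq_mul]
      have hj : (-(j * (-1 : ZMod q))) = j := by ring
      have hj2 : χ⁻¹ (-j) = χ⁻¹ (-1) * χ⁻¹ j := by rw [← map_mul, neg_one_mul]
      rw [hj, hj2]; ring
    rw [Finset.sum_congr rfl fun j _ => this j, ← Finset.mul_sum, ← Finset.mul_sum]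
    rfl
  rw [h2] at h1
  have hone : χ 1 = 1 := map_one χ
  have hinv : χ (-1) * χ⁻¹ (-1) = 1 := by
    rw [← MulChar.mul_apply, mul_inv_cancel, MulChar.one_apply (IsUnit.neg isUnit_one)]
  have hq : (q : ℂ) ≠ 0 := Nat.cast_ne_zero.mpr (NeZero.ne q)
  rw [hone, smul_eq_mul] at h1
  have h3 : gaussSum χ ZMod.stdAddChar * (χ⁻¹ (-1) * gaussSum χ⁻¹ ZMod.stdAddChar)
      = (q : ℂ) := by
    have h4 := congrArg (fun z => (q : ℂ) * z) h1
    simpa only [← mul_assoc, mul_inv_cancel₀ hq, one_mul, mul_one] using h4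
  calc gaussSum χ ZMod.stdAddChar * gaussSum χ⁻¹ ZMod.stdAddChar
      = χ (-1) * χ⁻¹ (-1) * (gaussSum χ ZMod.stdAddChar * gaussSum χ⁻¹ ZMod.stdAddChar) := by
        rw [hinv, one_mul]
    _ = χ (-1) * (gaussSum χ ZMod.stdAddChar * (χ⁻¹ (-1) * gaussSum χ⁻¹ ZMod.stdAddChar)) := by
        ring
    _ = χ (-1) * q := by rw [h3]


lemma fiber_sum_zero {p : ℕ} (hp : p.Prime) {d q : ℕ} [NeZero q] [NeZero d]
    (hq_eq : q = d * p) (hdpos : 0 < d) (z : ZMod d) :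
    ∑ y ∈ Finset.univ.filter
        (fun y : ZMod q => ((y.val : ZMod d)) = z),
      ZMod.stdAddChar y = 0 := by
  classical
  have hzlt : z.val < d := ZMod.val_lt z
  set e : ℕ → ZMod q := fun i => ((z.val + d * i : ℕ) : ZMod q) with he_def
  have hlt : ∀ i < p, z.val + d * i < q := by
    intro i hip
    have h1 : d * (i + 1) ≤ d * p := Nat.mul_le_mul_left d hip
    calc z.val + d * i < d + d * i := by omega
      _ = d * (i + 1) := by ring
      _ ≤ d * p := h1
      _ = q := by rw [hq_eq, mul_comm]
  have himg : Finset.univ.filter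
      (fun y : ZMod q => ((y.val : ZMod d)) = z) = (Finset.range p).image e := by
    ext y
    simp only [Finset.mem_filter, Finset.mem_univ, true_and, Finset.mem_image,
      Finset.mem_range]
    constructor
    · intro hy
      refine ⟨y.val / d, ?_, ?_⟩
      · have h1 : y.val < q := ZMod.val_lt y
        exact Nat.div_lt_of_lt_mul (lt_of_lt_of_le h1 hq_eq.le)
      · have hmod : y.val % d = z.val := by
          have h2 : ((y.val : ZMod d)).val = z.val := by rw [hy]
          rwa [ZMod.val_natCast] at h2
        show ((z.val + d * (y.val / d) : ℕ) : ZMod q) = y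
        rw [← hmod, Nat.mod_add_div]
        exact ZMod.natCast_rightInverse y
    · rintro ⟨i, hip, rfl⟩
      show (((e i).val : ZMod d)) = z
      rw [he_def]
      simp only []
      rw [ZMod.val_cast_of_lt (hlt i hip)]
      push_cast
      rw [ZMod.natCast_self]
      simp only [zero_mul, add_zero]
      exact ZMod.natCast_rightInverse z
  rw [himg, Finset.sum_image]
  · have hψ : ∀ i ∈ Finset.range p, ZMod.stdAddChar (e i)
        = Complex.exp (2 * Real.pi * Complex.I * z.val / q)
          * Complex.exp (2 * Real.pi * Complex.I / p) ^ i := by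
      intro i _
      have h1 : e i = (((z.val + d * i : ℕ) : ℤ) : ZMod q) := by
        rw [he_def]; push_cast; norm_num
      rw [h1, ZMod.stdAddChar_coe]
      have hqC : (q : ℂ) = (d : ℂ) * (p : ℂ) := by exact_mod_cast congrArg Nat.cast hq_eq
      have hpC : (p : ℂ) ≠ 0 := Nat.cast_ne_zero.mpr hp.pos.ne'
      have hdC : (d : ℂ) ≠ 0 := Nat.cast_ne_zero.mpr hdpos.ne'
      have h2 : 2 * (Real.pi : ℂ) * Complex.I * ((z.val + d * i : ℕ) : ℤ) / q
          = 2 * Real.pi * Complex.I * z.val / q + i * (2 * Real.pi * Complex.I / p) := by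
        push_cast
        rw [hqC]
        field_simp
      rw [h2, Complex.exp_add, Complex.exp_nat_mul]
    rw [Finset.sum_congr rfl hψ, ← Finset.mul_sum,
      (Complex.isPrimitiveRoot_exp p hp.pos.ne').geom_sum_eq_zero hp.one_lt, mul_zero]
  · intro i hi j hj hij
    rw [he_def] at hij
    simp only [] at hij
    have h1 := congrArg ZMod.val hij
    rw [ZMod.val_cast_of_lt (hlt i (Finset.mem_range.mp hi)),
      ZMod.val_cast_of_lt (hlt j (Finset.mem_range.mp hj))] at h1
    have h2 : d * i = d * j := by omega
    exact Nat.eq_of_mul_eq_mul_left hdpos h2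

lemma gaussSum_eq_zero_of_not_isPrimitive {p : ℕ} [hp : Fact p.Prime] {β : ℕ} (hβ : 2 ≤ β)
    [NeZero (p ^ β)] (χ : DirichletCharacter ℂ (p ^ β)) (hχ : ¬χ.IsPrimitive) :
    gaussSum χ ZMod.stdAddChar = 0 := by
  classical
  haveI : NeZero (p ^ (β - 1)) := ⟨pow_ne_zero _ hp.out.pos.ne'⟩
  set d := p ^ (β - 1) with hd_def
  have hd : d ∣ p ^ β := pow_dvd_pow p (by omega)
  -- χ factors through level d
  have hcond : χ.conductor ∣ d := by
    obtain ⟨i, hi, hc⟩ := (Nat.dvd_prime_pow hp.out).mp χ.conductor_dvd_level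
    have hne : i ≠ β := fun h => hχ (by rw [DirichletCharacter.IsPrimitive, hc, h])
    rw [hc, hd_def]
    exact pow_dvd_pow p (by omega)
  obtain ⟨hdvd, χ₀, hχ₀⟩ := χ.factorsThrough_conductor
  set χ' : DirichletCharacter ℂ d := DirichletCharacter.changeLevel hcond χ₀ with hχ'_def
  have hfac : χ = DirichletCharacter.changeLevel hd χ' := by
    rw [hχ'_def, ← DirichletCharacter.changeLevel_trans χ₀ hcond hd]
    exact hχ₀
  have key : ∀ y : ZMod (p ^ β), χ y = χ' ((y.val : ZMod d)) := by
    intro y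
    by_cases hy : IsUnit y
    · obtain ⟨v, rfl⟩ := hy
      rw [hfac, DirichletCharacter.changeLevel_eq_cast_of_dvd χ' hd v, ZMod.natCast_val]
    · rw [MulChar.map_nonunit χ hy, MulChar.map_nonunit χ']
      intro hud
      apply hy
      have h1 : Nat.Coprime y.val d := (ZMod.isUnit_iff_coprime _ _).mp hud
      have h2 : Nat.Coprime y.val p := by
        rw [hd_def] at h1
        have hβ1 : 0 < β - 1 := by omega
        exact (Nat.coprime_pow_right_iff hβ1 _ _).mp h1
      have h3 : IsUnit ((y.val : ZMod (p ^ β))) :=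
        (ZMod.isUnit_iff_coprime _ _).mpr (h2.pow_right β)
      rwa [ZMod.natCast_rightInverse y] at h3
  rw [gaussSum, Finset.sum_congr rfl fun y _ => by rw [key y],
    ← Finset.sum_fiberwise Finset.univ (fun y : ZMod (p ^ β) => ((y.val : ZMod d)))
      (fun y => χ' ((y.val : ZMod d)) * ZMod.stdAddChar y)]
  refine Finset.sum_eq_zero fun z _ => ?_
  have hz : ∑ y ∈ Finset.univ.filter
        (fun y : ZMod (p ^ β) => ((y.val : ZMod d)) = z),
      χ' ((y.val : ZMod d)) * ZMod.stdAddChar y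
      = χ' z * ∑ y ∈ Finset.univ.filter
        (fun y : ZMod (p ^ β) => ((y.val : ZMod d)) = z), ZMod.stdAddChar y := by
    rw [Finset.mul_sum]
    refine Finset.sum_congr rfl fun y hy => ?_
    rw [(Finset.mem_filter.mp hy).2]
  have hq_eq : p ^ β = d * p := by
    rw [hd_def, ← pow_succ]
    congr 1
    omega
  rw [hz, fiber_sum_zero hp.out hq_eq (pow_pos hp.out.pos _) z, mul_zero]

theorem stmt9 (p : ℕ) [Fact p.Prime] (β n : ℕ) (hβ : 2 ≤ β) (hn : 2 ≤ n)
    (m : ℤ) (hm : IsCoprime m (p : ℤ)) :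
    (∑ x : (ZMod (p ^ β))ˣ,
        Kl (p ^ β) n (x : ZMod (p ^ β)) *
          (Kl (p ^ β) n ((m : ZMod (p ^ β)) * x) +
            Kl (p ^ β) n (-((m : ZMod (p ^ β)) * x)))) =
      (p : ℂ) ^ (β * n) * (2 / (Nat.totient (p ^ β) : ℂ)) *
        ∑ χ : DirichletCharacter ℂ (p ^ β),
          if χ.IsPrimitive ∧ χ.Even then
            (starRingEnd ℂ) (χ (m : ZMod (p ^ β)))
          else 0 := by
  classical
  have hp : Fact p.Prime := inferInstance
  -- `m` is a unit mod `p ^ β`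
  obtain ⟨a, b, hab⟩ := hm.pow_right (n := β)
  have hp0 : ((p : ZMod (p ^ β))) ^ β = 0 := by
    have h := ZMod.natCast_self (p ^ β)
    push_cast at h
    exact h
  have hu : IsUnit (m : ZMod (p ^ β)) := by
    have h := congrArg (fun z : ℤ => ((z : ZMod (p ^ β)))) hab
    push_cast at h
    rw [hp0, mul_zero, add_zero] at h
    exact IsUnit.of_mul_eq_one _ (by rw [mul_comm]; exact h)
  set u : (ZMod (p ^ β))ˣ := hu.unit with hu_def
  have hum : (u : ZMod (p ^ β)) = (m : ZMod (p ^ β)) := hu.unit_spec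
  calc (∑ x : (ZMod (p ^ β))ˣ,
        Kl (p ^ β) n (x : ZMod (p ^ β)) *
          (Kl (p ^ β) n ((m : ZMod (p ^ β)) * x) +
            Kl (p ^ β) n (-((m : ZMod (p ^ β)) * x))))
      = (∑ x : (ZMod (p ^ β))ˣ, Kl (p ^ β) n ↑x * Kl (p ^ β) n (↑u * ↑x))
        + ∑ x : (ZMod (p ^ β))ˣ, Kl (p ^ β) n ↑x * Kl (p ^ β) n (↑(-u) * ↑x) := by
        rw [← Finset.sum_add_distrib]
        refine Finset.sum_congr rfl fun x _ => ?_
        rw [Units.val_neg, neg_mul, hum, mul_add]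
    _ = ((p ^ β).totient : ℂ)⁻¹ * ∑ χ : DirichletCharacter ℂ (p ^ β),
          χ ↑u⁻¹ * ((gaussSum χ ZMod.stdAddChar) ^ n * (gaussSum χ⁻¹ ZMod.stdAddChar) ^ n)
        + ((p ^ β).totient : ℂ)⁻¹ * ∑ χ : DirichletCharacter ℂ (p ^ β),
          χ ↑(-u)⁻¹ * ((gaussSum χ ZMod.stdAddChar) ^ n
            * (gaussSum χ⁻¹ ZMod.stdAddChar) ^ n) := by
        rw [T_eval n u, T_eval n (-u)]
    _ = ∑ χ : DirichletCharacter ℂ (p ^ β),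
          ((p ^ β).totient : ℂ)⁻¹ * ((χ ↑u⁻¹ + χ ↑(-u)⁻¹)
            * ((gaussSum χ ZMod.stdAddChar) ^ n * (gaussSum χ⁻¹ ZMod.stdAddChar) ^ n)) := by
        rw [Finset.mul_sum, Finset.mul_sum, ← Finset.sum_add_distrib]
        refine Finset.sum_congr rfl fun χ _ => ?_
        ring
    _ = (p : ℂ) ^ (β * n) * (2 / (Nat.totient (p ^ β) : ℂ)) *
        ∑ χ : DirichletCharacter ℂ (p ^ β),
          if χ.IsPrimitive ∧ χ.Even then
            (starRingEnd ℂ) (χ (m : ZMod (p ^ β)))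
          else 0 := by
        rw [Finset.mul_sum]
        refine Finset.sum_congr rfl fun χ _ => ?_
        have hneg_inv : ((-u)⁻¹ : (ZMod (p ^ β))ˣ) = -u⁻¹ := by
          refine inv_eq_of_mul_eq_one_right ?_
          rw [neg_mul_neg, mul_inv_cancel]
        have hχneg : χ ↑(-u)⁻¹ = χ (-1) * χ ↑u⁻¹ := by
          rw [hneg_inv, Units.val_neg, ← neg_one_mul, map_mul]
        by_cases hprim : χ.IsPrimitive
        · rcases χ.even_or_odd with heven | hodd
          · rw [if_pos ⟨hprim, heven⟩]
            have hGG : gaussSum χ ZMod.stdAddChar * gaussSum χ⁻¹ ZMod.stdAddChar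
                = ((p ^ β : ℕ) : ℂ) := by
              rw [gaussSum_mul_gaussSum_inv hprim, show χ (-1) = 1 from heven, one_mul]
            have hpow : (gaussSum χ ZMod.stdAddChar) ^ n
                * (gaussSum χ⁻¹ ZMod.stdAddChar) ^ n = (p : ℂ) ^ (β * n) := by
              rw [← mul_pow, hGG]
              push_cast
              rw [← pow_mul]
            have hstar : (starRingEnd ℂ) (χ (m : ZMod (p ^ β))) = χ ↑u⁻¹ := by
              rw [← hum, char_inv_unit, starRingEnd_apply]
              exact MulChar.star_apply' χ ↑u
            rw [hχneg, show χ (-1) = 1 from heven, one_mul, hpow, hstar,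
              div_eq_mul_inv]
            ring
          · have hne : ¬(χ.IsPrimitive ∧ χ.Even) := fun h => by
              have h1 := (show χ (-1) = 1 from h.2).symm.trans (show χ (-1) = -1 from hodd)
              norm_num at h1
            rw [if_neg hne, hχneg, show χ (-1) = -1 from hodd]
            ring
        · have hne : ¬(χ.IsPrimitive ∧ χ.Even) := fun h => hprim h.1
          rw [if_neg hne, gaussSum_eq_zero_of_not_isPrimitive hβ χ hprim,
            zero_pow (by omega : n ≠ 0)]
          ring
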